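/- A switched combination of two latin squares with disjoint letter sets is itself a latin square: for latin squares A₀, A₁ of order n with disjoint letters and any switching matrix S, the function L of order 2n defined by L(i,j) = A_ε(⌊i/2⌋,⌊j/2⌋), where ε = 1 iff i + j + S(⌊i/2⌋,⌊j/2⌋) ≡ 0 mod 2, has every row and every column injective (hence bijective onto the 2n letters). -/
import Mathlib


/-- A latin square of order `n` as a function: each row and each column is injective. -/
def IsLatin {n : ℕ} (A : Fin n → Fin n → Fin n) : Prop :=
  (∀ r, Function.Injective (A r)) ∧ (∀ c, Function.Injective (fun r => A r c))

/-- The block coordinate of a row or column index. -/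
def blk {n : ℕ} (i : Fin (2 * n)) : Fin n :=
  ⟨i.val / 2, by have := i.isLt; omega⟩

/-- The switched combination of two latin squares `A₀`, `A₁` of order `n` with switching
matrix `S`: letters of `A₀` are embedded as the even numbers `2k` and letters of `A₁` as
the odd numbers `2k+1` in `Fin (2n)`, and `L(i,j) = A_ε(⌊i/2⌋,⌊j/2⌋)` where `ε = 1` iff
`i + j + S(⌊i/2⌋,⌊j/2⌋) ≡ 0 (mod 2)`. -/
def comb {n : ℕ} (A0 A1 : Fin n → Fin n → Fin n) (S : Fin n → Fin n → ZMod 2)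
    (i j : Fin (2 * n)) : Fin (2 * n) :=
  if ((i.val : ZMod 2) + (j.val : ZMod 2) + S (blk i) (blk j) = 0)
    then ⟨2 * (A1 (blk i) (blk j)).val + 1, by have := (A1 (blk i) (blk j)).isLt; omega⟩
    else ⟨2 * (A0 (blk i) (blk j)).val, by have := (A0 (blk i) (blk j)).isLt; omega⟩

/-- A switched combination of two latin squares with disjoint letter sets is a latin
square: every row and every column of it is injective. -/
theorem stmt19 {n : ℕ} (A0 A1 : Fin n → Fin n → Fin n)
    (hA0 : IsLatin A0) (hA1 : IsLatin A1) (S : Fin n → Fin n → ZMod 2) :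
    IsLatin (comb A0 A1 S) := by
  have key : ∀ i j : Fin (2 * n), blk i = blk j →
      ((i.val : ZMod 2) = (j.val : ZMod 2)) → i = j := by
    intro i j hb hp
    have hd : i.val / 2 = j.val / 2 := congrArg Fin.val hb
    have hm : i.val % 2 = j.val % 2 := by
      have := (ZMod.natCast_eq_natCast_iff _ _ _).mp hp
      exact this
    exact Fin.ext (by omega)
  constructor
  · intro r a b h
    unfold comb at h
    split_ifs at h with h1 h2 h2
    · have hA : A1 (blk r) (blk a) = A1 (blk r) (blk b) := by
        have := congrArg Fin.val h
        simp only at this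
        exact Fin.ext (by omega)
      have hbab := hA1.1 (blk r) hA
      apply key _ _ hbab
      rw [hbab] at h1
      have := h1.trans h2.symm
      have h3 : (r.val : ZMod 2) + ((a.val : ZMod 2) + S (blk r) (blk b)) =
          (r.val : ZMod 2) + ((b.val : ZMod 2) + S (blk r) (blk b)) := by
        rw [← add_assoc, ← add_assoc]; exact this
      exact add_right_cancel (add_left_cancel h3)
    · have := congrArg Fin.val h; simp only at this; omega
    · have := congrArg Fin.val h; simp only at this; omega
    · have hA : A0 (blk r) (blk a) = A0 (blk r) (blk b) := by
        have := congrArg Fin.val h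
        simp only at this
        exact Fin.ext (by omega)
      have hbab := hA0.1 (blk r) hA
      apply key _ _ hbab
      rw [hbab] at h1
      have hall : ∀ x : ZMod 2, x = 0 ∨ x = 1 := by decide
      rcases hall ((r.val : ZMod 2) + (a.val : ZMod 2) + S (blk r) (blk b)) with h | h
      · exact absurd h h1
      rcases hall ((r.val : ZMod 2) + (b.val : ZMod 2) + S (blk r) (blk b)) with h' | h'
      · exact absurd h' h2
      have := h.trans h'.symm
      have h3 : (r.val : ZMod 2) + ((a.val : ZMod 2) + S (blk r) (blk b)) =
          (r.val : ZMod 2) + ((b.val : ZMod 2) + S (blk r) (blk b)) := by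
        rw [← add_assoc, ← add_assoc]; exact this
      exact add_right_cancel (add_left_cancel h3)
  · intro c a b h
    unfold comb at h
    simp only at h
    split_ifs at h with h1 h2 h2
    · have hA : A1 (blk a) (blk c) = A1 (blk b) (blk c) := by
        have := congrArg Fin.val h
        simp only at this
        exact Fin.ext (by omega)
      have hbab := hA1.2 (blk c) hA
      apply key _ _ hbab
      rw [hbab] at h1
      have := h1.trans h2.symm
      have h3 : (a.val : ZMod 2) + ((c.val : ZMod 2) + S (blk b) (blk c)) =
          (b.val : ZMod 2) + ((c.val : ZMod 2) + S (blk b) (blk c)) := by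
        rw [← add_assoc, ← add_assoc]; exact this
      exact add_right_cancel h3
    · have := congrArg Fin.val h; simp only at this; omega
    · have := congrArg Fin.val h; simp only at this; omega
    · have hA : A0 (blk a) (blk c) = A0 (blk b) (blk c) := by
        have := congrArg Fin.val h
        simp only at this
        exact Fin.ext (by omega)
      have hbab := hA0.2 (blk c) hA
      apply key _ _ hbab
      rw [hbab] at h1
      have hall : ∀ x : ZMod 2, x = 0 ∨ x = 1 := by decide
      rcases hall ((a.val : ZMod 2) + (c.val : ZMod 2) + S (blk b) (blk c)) with h | h
      · exact absurd h h1
      rcases hall ((b.val : ZMod 2) + (c.val : ZMod 2) + S (blk b) (blk c)) with h' | h'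
      · exact absurd h' h2
      have := h.trans h'.symm
      have h3 : (a.val : ZMod 2) + ((c.val : ZMod 2) + S (blk b) (blk c)) =
          (b.val : ZMod 2) + ((c.val : ZMod 2) + S (blk b) (blk c)) := by
        rw [← add_assoc, ← add_assoc]; exact this
      exact add_right_cancel h3
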